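/- Let α be a circle of radius r and let S be a set of exactly 6 circles, each orthogonal to α, each of radius at least r, and pairwise non-nested. Then every circle in S has radius exactly r. -/

import Mathlib

open Complex

section helpers

lemma re_mul_conj (z w : ℂ) :
    (z * (starRingEnd ℂ) w).re = ‖z‖ * ‖w‖ * Real.cos (z.arg - w.arg) := by
  conv_lhs => rw [← norm_mul_exp_arg_mul_I z, ← norm_mul_exp_arg_mul_I w]
  simp only [map_mul, ← exp_conj, conj_ofReal, conj_I, mul_neg]
  have : (↑(‖z‖) * exp (↑(arg z) * I)) * (↑(‖w‖) * exp (-(↑(arg w) * I))) =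
      ((‖z‖ * ‖w‖ : ℝ) : ℂ) * exp ((↑(z.arg - w.arg) : ℂ) * I) := by
    rw [mul_mul_mul_comm, ← Complex.exp_add, Complex.ofReal_sub]
    push_cast
    ring_nf
  rw [this]
  rw [Complex.mul_re, Complex.ofReal_re, Complex.ofReal_im, Complex.exp_ofReal_mul_I_re]
  ring



open Real

lemma cos_bound_interval {t : ℝ} (h2 : |t| < 2 * π) (h : Real.cos t ≤ 1 / 2) :
    π / 3 ≤ |t| ∧ |t| ≤ 5 * π / 3 := by
  have hpi := Real.pi_gt_three
  constructor
  · by_contra h'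
    push_neg at h'
    have := Real.cos_lt_cos_of_nonneg_of_le_pi (abs_nonneg t) (by linarith) h'
    rw [Real.cos_abs, Real.cos_pi_div_three] at this
    linarith
  · by_contra h'
    push_neg at h'
    have h0 : 0 ≤ 2 * π - |t| := by linarith
    have h1 : 2 * π - |t| < π / 3 := by linarith
    have := Real.cos_lt_cos_of_nonneg_of_le_pi h0 (by linarith) h1
    rw [Real.cos_pi_div_three] at this
    have hc : Real.cos (2 * π - |t|) = Real.cos t := by
      rw [Real.cos_two_pi_sub, Real.cos_abs]
    linarith [hc ▸ this]

lemma core_six (A : Finset ℝ) (hA : A.card = 6)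
    (hpair : ∀ x ∈ A, ∀ y ∈ A, x ≠ y → π / 3 ≤ |x - y| ∧ |x - y| ≤ 5 * π / 3) :
    ∀ x ∈ A, ∃ y ∈ A, |x - y| = π / 3 := by
  have hπ := Real.pi_pos
  set l := A.sort (· ≤ ·) with hldef
  have hlen : l.length = 6 := by rw [hldef, Finset.length_sort, hA]
  have hmem : ∀ x, x ∈ l ↔ x ∈ A := fun x => Finset.mem_sort _
  have hsorted : l.Pairwise (· ≤ ·) := Finset.pairwise_sort _ _
  have hnd : l.Nodup := Finset.sort_nodup _ _
  clear_value l
  obtain ⟨t0, t1, t2, t3, t4, t5, rfl⟩ :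
      ∃ a b c d e f, l = [a, b, c, d, e, f] := by
    match l, hlen with
    | [a, b, c, d, e, f], _ => exact ⟨a, b, c, d, e, f, rfl⟩
  simp only [List.pairwise_cons, List.mem_cons, List.nodup_cons, List.mem_singleton,
    List.not_mem_nil, List.mem_cons] at hsorted hnd
  -- strict chain
  have hm : ∀ x, x ∈ A ↔ x = t0 ∨ x = t1 ∨ x = t2 ∨ x = t3 ∨ x = t4 ∨ x = t5 := by
    intro x
    rw [← hmem x]; simp
  have h01 : t0 < t1 := lt_of_le_of_ne (by tauto) (by tauto)
  have h12 : t1 < t2 := lt_of_le_of_ne (by tauto) (by tauto)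
  have h23 : t2 < t3 := lt_of_le_of_ne (by tauto) (by tauto)
  have h34 : t3 < t4 := lt_of_le_of_ne (by tauto) (by tauto)
  have h45 : t4 < t5 := lt_of_le_of_ne (by tauto) (by tauto)
  have mt0 : t0 ∈ A := (hm t0).2 (by tauto)
  have mt1 : t1 ∈ A := (hm t1).2 (by tauto)
  have mt2 : t2 ∈ A := (hm t2).2 (by tauto)
  have mt3 : t3 ∈ A := (hm t3).2 (by tauto)
  have mt4 : t4 ∈ A := (hm t4).2 (by tauto)
  have mt5 : t5 ∈ A := (hm t5).2 (by tauto)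
  have gap : ∀ x ∈ A, ∀ y ∈ A, x < y → π / 3 ≤ y - x := by
    intro x hx y hy hxy
    have := (hpair x hx y hy (ne_of_lt hxy)).1
    rwa [abs_sub_comm, abs_of_pos (by linarith)] at this
  have g01 := gap t0 mt0 t1 mt1 h01
  have g12 := gap t1 mt1 t2 mt2 h12
  have g23 := gap t2 mt2 t3 mt3 h23
  have g34 := gap t3 mt3 t4 mt4 h34
  have g45 := gap t4 mt4 t5 mt5 h45
  have gtot : t5 - t0 ≤ 5 * π / 3 := by
    have := (hpair t0 mt0 t5 mt5 (by linarith)).2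
    rwa [abs_sub_comm, abs_of_pos (by linarith)] at this
  have e01 : t1 - t0 = π / 3 := by linarith
  have e12 : t2 - t1 = π / 3 := by linarith
  have e23 : t3 - t2 = π / 3 := by linarith
  have e34 : t4 - t3 = π / 3 := by linarith
  have e45 : t5 - t4 = π / 3 := by linarith
  intro x hx
  have habs : ∀ a b : ℝ, b - a = π / 3 → |a - b| = π / 3 := by
    intro a b h
    rw [abs_sub_comm, abs_of_pos (by linarith)]; exact h
  rcases (hm x).1 hx with rfl | rfl | rfl | rfl | rfl | rfl
  · exact ⟨t1, mt1, habs _ _ e01⟩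
  · exact ⟨t2, mt2, habs _ _ e12⟩
  · exact ⟨t3, mt3, habs _ _ e23⟩
  · exact ⟨t4, mt4, habs _ _ e34⟩
  · exact ⟨t5, mt5, habs _ _ e45⟩
  · exact ⟨t4, mt4, by rw [abs_of_pos (by linarith)]; exact e45⟩





lemma circles_meet (c1 c2 : ℂ) (ρ1 ρ2 : ℝ) (h1 : 0 < ρ1) (h2 : 0 < ρ2)
    (hlo : |ρ1 - ρ2| ≤ dist c1 c2) (hhi : dist c1 c2 ≤ ρ1 + ρ2) :
    ∃ x : ℂ, dist x c1 = ρ1 ∧ dist x c2 = ρ2 := by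
  rcases eq_or_lt_of_le (dist_nonneg : (0:ℝ) ≤ dist c1 c2) with h0 | h0
  · have hc : c1 = c2 := by rw [← dist_le_zero, ← h0]
    have hρ : ρ1 = ρ2 := by
      have : |ρ1 - ρ2| ≤ 0 := le_of_le_of_eq hlo h0.symm
      have := abs_nonpos_iff.mp this
      linarith
    refine ⟨c1 + ρ1, ?_, ?_⟩
    · rw [Complex.dist_eq]
      simp [abs_of_pos h1]
    · rw [← hc, ← hρ, Complex.dist_eq]
      simp [abs_of_pos h1]
  · set d := dist c1 c2 with hd
    have hdC : (d : ℂ) ≠ 0 := by exact_mod_cast ne_of_gt h0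
    set t : ℝ := (d ^ 2 + ρ1 ^ 2 - ρ2 ^ 2) / (2 * d) with ht
    have ht2 : t * (2 * d) = d ^ 2 + ρ1 ^ 2 - ρ2 ^ 2 := by
      rw [ht]; field_simp
    have h1' : (ρ1 - ρ2) ^ 2 ≤ d ^ 2 := by
      nlinarith [_root_.sq_abs (ρ1 - ρ2), abs_nonneg (ρ1 - ρ2)]
    have h2' : d ^ 2 ≤ (ρ1 + ρ2) ^ 2 := by nlinarith
    have hsq : t ^ 2 ≤ ρ1 ^ 2 := by
      rw [ht, div_pow, div_le_iff₀ (by positivity)]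
      nlinarith [mul_nonneg (sub_nonneg.2 h2') (sub_nonneg.2 h1')]
    set h : ℝ := Real.sqrt (ρ1 ^ 2 - t ^ 2) with hh
    have hh2 : h ^ 2 = ρ1 ^ 2 - t ^ 2 := Real.sq_sqrt (by linarith)
    have hdz : ‖c2 - c1‖ = d := by
      rw [hd, dist_comm, Complex.dist_eq]
    refine ⟨c1 + (c2 - c1) * (t + h * I) / d, ?_, ?_⟩
    · rw [Complex.dist_eq]
      have e : c1 + (c2 - c1) * (↑t + ↑h * I) / ↑d - c1 = (c2 - c1) * (↑t + ↑h * I) / ↑d := by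
        ring
      rw [e, norm_div, norm_mul, hdz, Complex.norm_add_mul_I, Complex.norm_real, Real.norm_eq_abs,
        abs_of_pos h0, mul_div_assoc, mul_comm, div_mul_cancel₀ _ (ne_of_gt h0)]
      rw [show t ^ 2 + h ^ 2 = ρ1 ^ 2 by linarith]
      exact Real.sqrt_sq h1.le
    · rw [Complex.dist_eq]
      have e : c1 + (c2 - c1) * (↑t + ↑h * I) / ↑d - c2 =
          (c2 - c1) * (↑(t - d) + ↑h * I) / ↑d := by
        push_cast
        field_simp
        ring
      rw [e, norm_div, norm_mul, hdz, Complex.norm_add_mul_I, Complex.norm_real, Real.norm_eq_abs,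
        abs_of_pos h0, mul_div_assoc, mul_comm, div_mul_cancel₀ _ (ne_of_gt h0)]
      rw [show (t - d) ^ 2 + h ^ 2 = ρ2 ^ 2 by nlinarith]
      exact Real.sqrt_sq h2.le

end helpers




/-- Equality case: if such a set `S` has exactly 6 circles, each orthogonal to
α, of radius at least `r`, pairwise disjoint-or-orthogonal and non-nested, then
every circle of `S` has radius exactly `r`. -/
theorem six_neighbours_all_radius_eq
    (cα : EuclideanSpace ℝ (Fin 2)) (r : ℝ) (hr : 0 < r)
    (S : Finset (EuclideanSpace ℝ (Fin 2) × ℝ))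
    (hpos : ∀ p ∈ S, r ≤ p.2)
    (horth : ∀ p ∈ S, r ^ 2 + p.2 ^ 2 = dist cα p.1 ^ 2)
    (harr : ∀ p ∈ S, ∀ q ∈ S, p ≠ q →
      Disjoint (Metric.sphere p.1 p.2) (Metric.sphere q.1 q.2) ∨
      p.2 ^ 2 + q.2 ^ 2 = dist p.1 q.1 ^ 2)
    (hnonnested : ∀ p ∈ S, ∀ q ∈ S, p ≠ q →
      ¬ Metric.closedBall p.1 p.2 ⊆ Metric.closedBall q.1 q.2)
    (hcard : S.card = 6) :
    ∀ p ∈ S, p.2 = r := by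
  have hπ := Real.pi_pos
  set f : EuclideanSpace ℝ (Fin 2) ≃ₗᵢ[ℝ] ℂ := Complex.orthonormalBasisOneI.repr.symm with hf
  set z : (EuclideanSpace ℝ (Fin 2) × ℝ) → ℂ := fun p => f p.1 - f cα with hz
  set a : (EuclideanSpace ℝ (Fin 2) × ℝ) → ℝ := fun p => (z p).arg with ha
  set dd : (EuclideanSpace ℝ (Fin 2) × ℝ) → ℝ := fun p => ‖z p‖ with hdd
  have hdist : ∀ p : EuclideanSpace ℝ (Fin 2) × ℝ, dd p = dist cα p.1 := by
    intro p
    rw [hdd]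
    simp only
    rw [← Complex.dist_eq, dist_comm]
    exact f.dist_map cα p.1
  -- basic bounds for members
  have hd2 : ∀ p ∈ S, dd p ^ 2 = r ^ 2 + p.2 ^ 2 := by
    intro p hp; rw [hdist p, ← horth p hp]
  have hρpos : ∀ p ∈ S, 0 < p.2 := fun p hp => lt_of_lt_of_le hr (hpos p hp)
  have hdpos : ∀ p ∈ S, 0 < dd p := by
    intro p hp
    have h2 := hd2 p hp
    have := hρpos p hp
    have h0 : 0 ≤ dd p := by rw [hdist p]; exact dist_nonneg
    nlinarith
  have hdbig : ∀ p ∈ S, 2 * r ^ 2 ≤ dd p ^ 2 := by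
    intro p hp
    have := hpos p hp
    rw [hd2 p hp]; nlinarith
  -- squared distance lower bound for pairs
  have hDlow : ∀ p ∈ S, ∀ q ∈ S, p ≠ q → p.2 ^ 2 + q.2 ^ 2 ≤ dist p.1 q.1 ^ 2 := by
    intro p hp q hq hpq
    rcases harr p hp q hq hpq with hdisj | horth2
    · by_contra hcon
      push_neg at hcon
      -- then |ρ1 - ρ2| ≤ D ≤ ρ1 + ρ2, circles meet, contradiction
      have hρp := hρpos p hp
      have hρq := hρpos q hq
      have hnn1 : q.2 < dist p.1 q.1 + p.2 := by
        by_contra hc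
        push_neg at hc
        exact hnonnested p hp q hq hpq
          (Metric.closedBall_subset_closedBall' (by linarith))
      have hnn2 : p.2 < dist p.1 q.1 + q.2 := by
        by_contra hc
        push_neg at hc
        exact hnonnested q hq p hp (Ne.symm hpq)
          (Metric.closedBall_subset_closedBall' (by rw [dist_comm q.1 p.1]; linarith))
      have hhi : dist p.1 q.1 ≤ p.2 + q.2 := by
        nlinarith [dist_nonneg (x := p.1) (y := q.1)]
      have hlo : |p.2 - q.2| ≤ dist p.1 q.1 := by
        rw [abs_sub_le_iff]; constructor <;> linarith
      have hfd : dist (f p.1) (f q.1) = dist p.1 q.1 := f.dist_map _ _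
      obtain ⟨x, hx1, hx2⟩ := circles_meet (f p.1) (f q.1) p.2 q.2 hρp hρq
        (by rwa [hfd]) (by rwa [hfd])
      have hm1 : f.symm x ∈ Metric.sphere p.1 p.2 := by
        rw [Metric.mem_sphere, ← f.dist_map, f.apply_symm_apply]
        exact hx1
      have hm2 : f.symm x ∈ Metric.sphere q.1 q.2 := by
        rw [Metric.mem_sphere, ← f.dist_map, f.apply_symm_apply]
        exact hx2
      exact Set.disjoint_left.mp hdisj hm1 hm2
    · linarith [horth2.ge, horth2.le]
  -- law of cosines and key inequality
  have key : ∀ p ∈ S, ∀ q ∈ S, p ≠ q →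
      dd p * dd q * Real.cos (a p - a q) ≤ r ^ 2 := by
    intro p hp q hq hpq
    have hlaw : dist p.1 q.1 ^ 2 =
        dd p ^ 2 + dd q ^ 2 - 2 * (dd p * dd q * Real.cos (a p - a q)) := by
      have h1 : dist p.1 q.1 = ‖z p - z q‖ := by
        rw [← f.dist_map p.1 q.1, Complex.dist_eq]
        congr 1
        rw [hz]; ring
      rw [h1, Complex.sq_norm, Complex.normSq_sub, re_mul_conj,
        Complex.normSq_eq_norm_sq, Complex.normSq_eq_norm_sq]
    have := hDlow p hp q hq hpq
    have hp2 := hd2 p hp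
    have hq2 := hd2 q hq
    nlinarith
  -- cos ≤ 1/2 for distinct pairs
  have hprod : ∀ p ∈ S, ∀ q ∈ S, 2 * r ^ 2 ≤ dd p * dd q := by
    intro p hp q hq
    have h1 := hdbig p hp
    have h2 := hdbig q hq
    have h3 := hdpos p hp
    have h4 := hdpos q hq
    nlinarith [mul_pos h3 h4, sq_nonneg (dd p * dd q - 2 * r ^ 2), sq_nonneg (dd p * dd q + 2 * r ^ 2)]
  have hcos : ∀ p ∈ S, ∀ q ∈ S, p ≠ q → Real.cos (a p - a q) ≤ 1 / 2 := by
    intro p hp q hq hpq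
    have h1 := key p hp q hq hpq
    have h2 := hprod p hp q hq
    by_contra hgt
    push_neg at hgt
    have h0 : 0 < dd p * dd q := mul_pos (hdpos p hp) (hdpos q hq)
    have h3 : dd p * dd q * (1 / 2) < dd p * dd q * Real.cos (a p - a q) :=
      mul_lt_mul_of_pos_left hgt h0
    linarith
  -- the angle finset
  have hinj : Set.InjOn a S := by
    intro p hp q hq hpq2
    by_contra hne
    have := hcos p hp q hq hne
    rw [hpq2, sub_self, Real.cos_zero] at this
    linarith
  set A : Finset ℝ := S.image a with hA
  have hAcard : A.card = 6 := by
    rw [hA, Finset.card_image_of_injOn hinj, hcard]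
  have hApair : ∀ x ∈ A, ∀ y ∈ A, x ≠ y →
      Real.pi / 3 ≤ |x - y| ∧ |x - y| ≤ 5 * Real.pi / 3 := by
    intro x hx y hy hxy
    obtain ⟨p, hp, rfl⟩ := Finset.mem_image.mp hx
    obtain ⟨q, hq, rfl⟩ := Finset.mem_image.mp hy
    have hpq : p ≠ q := by rintro rfl; exact hxy rfl
    apply cos_bound_interval
    · have h1 := Complex.neg_pi_lt_arg (z p)
      have h2 := Complex.arg_le_pi (z p)
      have h3 := Complex.neg_pi_lt_arg (z q)
      have h4 := Complex.arg_le_pi (z q)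
      rw [abs_sub_lt_iff]
      constructor <;> [skip; skip] <;> simp only [ha] <;> linarith
    · exact hcos p hp q hq hpq
  have hnbr := core_six A hAcard hApair
  -- conclude
  intro p hp
  obtain ⟨y, hy, hyabs⟩ := hnbr (a p) (Finset.mem_image_of_mem a hp)
  obtain ⟨q, hq, rfl⟩ := Finset.mem_image.mp hy
  have hpq : p ≠ q := by
    rintro rfl
    rw [sub_self, abs_zero] at hyabs
    linarith
  have hcoseq : Real.cos (a p - a q) = 1 / 2 := by
    rw [← Real.cos_abs, hyabs, Real.cos_pi_div_three]
  have hkey := key p hp q hq hpq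
  rw [hcoseq] at hkey
  have h2 := hdbig q hq
  have h3 := hdpos p hp
  have h4 := hdpos q hq
  have hp2 := hd2 p hp
  have hppos := hρpos p hp
  have hle : p.2 ≤ r := by
    by_contra hgt
    push_neg at hgt
    have hdpq : dd p * dd q ≤ 2 * r ^ 2 := by linarith
    have hsq1 : dd p ^ 2 * dd q ^ 2 ≤ 4 * r ^ 4 := by nlinarith [mul_pos h3 h4]
    have h5 : 2 * r ^ 2 < dd p ^ 2 := by nlinarith
    have h6 : (2 * r ^ 2) * (2 * r ^ 2) < dd p ^ 2 * dd q ^ 2 := by nlinarith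
    nlinarith
  exact le_antisymm hle (hpos p hp)
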